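/- Let n ≥ 1 and let K : (0,∞) × ℝⁿ × ℝⁿ → ℝ be the Mehler kernel K(t,x,y) = π^{−n/2}(1 − e^{−2t})^{−n/2} · exp( −[ ((|x|² + |y|²)/2)(1 + e^{−2t}) − 2 e^{−t} x·y ] / (1 − e^{−2t}) ). Then K satisfies the semigroup (Chapman–Kolmogorov) property: for all t, t' > 0 and x, y ∈ ℝⁿ, ∫_{ℝⁿ} K(t,x,z) K(t',z,y) dz = K(t + t', x, y). -/

import Mathlib

open Real MeasureTheory

/-- The Mehler kernel of the harmonic oscillator
`L = (1/2) ∑ i (-∂²/∂xᵢ² + xᵢ² - 1)` on `ℝⁿ`. -/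
noncomputable def mehlerKernel (n : ℕ) (t : ℝ) (x y : Fin n → ℝ) : ℝ :=
  Real.pi ^ (-(n : ℝ) / 2) * (1 - Real.exp (-(2 * t))) ^ (-(n : ℝ) / 2) *
    Real.exp (-((((∑ i, x i ^ 2) + ∑ i, y i ^ 2) / 2) * (1 + Real.exp (-(2 * t)))
        - 2 * Real.exp (-t) * ∑ i, x i * y i) / (1 - Real.exp (-(2 * t))))

/-- One-dimensional Mehler factor, written in terms of `s = exp (-t)`. -/
noncomputable def mehlerK1 (s a b : ℝ) : ℝ :=
  π ^ (-(1:ℝ) / 2) * (1 - s ^ 2) ^ (-(1:ℝ) / 2) *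
    Real.exp (-((a ^ 2 + b ^ 2) / 2 * (1 + s ^ 2) - 2 * s * (a * b)) / (1 - s ^ 2))

lemma gauss_lin (A B D : ℝ) (hA : 0 < A) :
    ∫ z : ℝ, Real.exp (-A * z ^ 2 + B * z + D)
      = Real.sqrt (π / A) * Real.exp (B ^ 2 / (4 * A) + D) := by
  have h1 : ∀ z : ℝ, Real.exp (-A * z ^ 2 + B * z + D)
      = Real.exp (-A * (z - B / (2 * A)) ^ 2) * Real.exp (B ^ 2 / (4 * A) + D) := by
    intro z
    rw [← Real.exp_add]
    congr 1
    field_simp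
    ring
  simp_rw [h1]
  rw [integral_mul_const]
  congr 1
  have := MeasureTheory.integral_sub_right_eq_self (μ := volume)
    (fun z : ℝ => Real.exp (-A * z ^ 2)) (B / (2 * A))
  rw [this, integral_gaussian]

lemma mehlerK1_semigroup (s s' a b : ℝ) (hs : 0 < s) (hs1 : s < 1)
    (hs' : 0 < s') (hs1' : s' < 1) :
    ∫ z : ℝ, mehlerK1 s a z * mehlerK1 s' z b = mehlerK1 (s * s') a b := by
  unfold mehlerK1
  have h1 : (0:ℝ) < 1 - s ^ 2 := by nlinarith
  have h2 : (0:ℝ) < 1 - s' ^ 2 := by nlinarith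
  have h3 : (0:ℝ) < 1 - (s * s') ^ 2 := by nlinarith
  set A : ℝ := (1 + s ^ 2) / (2 * (1 - s ^ 2)) + (1 + s' ^ 2) / (2 * (1 - s' ^ 2)) with hA_def
  have hA : 0 < A := by positivity
  set B : ℝ := 2 * (s * a / (1 - s ^ 2) + s' * b / (1 - s' ^ 2)) with hB_def
  set D : ℝ := -(a ^ 2 * (1 + s ^ 2) / (2 * (1 - s ^ 2)) + b ^ 2 * (1 + s' ^ 2) / (2 * (1 - s' ^ 2))) with hD_def
  have hpt : ∀ z : ℝ,
      (π ^ (-(1:ℝ) / 2) * (1 - s ^ 2) ^ (-(1:ℝ) / 2) *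
        Real.exp (-((a ^ 2 + z ^ 2) / 2 * (1 + s ^ 2) - 2 * s * (a * z)) / (1 - s ^ 2))) *
      (π ^ (-(1:ℝ) / 2) * (1 - s' ^ 2) ^ (-(1:ℝ) / 2) *
        Real.exp (-((z ^ 2 + b ^ 2) / 2 * (1 + s' ^ 2) - 2 * s' * (z * b)) / (1 - s' ^ 2)))
      = (π ^ (-(1:ℝ) / 2) * (1 - s ^ 2) ^ (-(1:ℝ) / 2) *
         (π ^ (-(1:ℝ) / 2) * (1 - s' ^ 2) ^ (-(1:ℝ) / 2))) *
        Real.exp (-A * z ^ 2 + B * z + D) := by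
    intro z
    rw [hA_def, hB_def, hD_def]
    rw [show ∀ u v w : ℝ, ∀ p q : ℝ, p * Real.exp u * (q * Real.exp v) = p * q * Real.exp (u + v) by
      intro u v w p q; rw [Real.exp_add]; ring]
    · congr 1
      field_simp
      ring
    · exact 0
  simp_rw [hpt]
  rw [integral_const_mul, gauss_lin A B D hA]
  have hA2 : A = (1 - (s * s') ^ 2) / ((1 - s ^ 2) * (1 - s' ^ 2)) := by
    rw [hA_def]; field_simp; ring
  have hexp : B ^ 2 / (4 * A) + D
      = -((a ^ 2 + b ^ 2) / 2 * (1 + (s * s') ^ 2) - 2 * (s * s') * (a * b))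
          / (1 - (s * s') ^ 2) := by
    rw [hB_def, hD_def, hA2]
    have h3' : (1:ℝ) - s ^ 2 * s' ^ 2 ≠ 0 := by rw [← mul_pow]; exact h3.ne'
    field_simp
    ring
  have hrp : ∀ x : ℝ, 0 ≤ x → x ^ (-(1:ℝ) / 2) = (Real.sqrt x)⁻¹ := by
    intro x hx
    rw [neg_div, Real.rpow_neg hx, Real.sqrt_eq_rpow]
  have hsqA : Real.sqrt A * (Real.sqrt (1 - s ^ 2) * Real.sqrt (1 - s' ^ 2))
      = Real.sqrt (1 - (s * s') ^ 2) := by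
    rw [← Real.sqrt_mul h1.le, ← Real.sqrt_mul hA.le]
    congr 1
    rw [hA2]
    field_simp
  have hconst : π ^ (-(1:ℝ) / 2) * (1 - s ^ 2) ^ (-(1:ℝ) / 2) *
      (π ^ (-(1:ℝ) / 2) * (1 - s' ^ 2) ^ (-(1:ℝ) / 2)) * Real.sqrt (π / A)
      = π ^ (-(1:ℝ) / 2) * (1 - (s * s') ^ 2) ^ (-(1:ℝ) / 2) := by
    rw [hrp _ pi_pos.le, hrp _ h1.le, hrp _ h2.le, hrp _ h3.le,
      Real.sqrt_div pi_pos.le, ← hsqA]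
    have p1 : (0:ℝ) < Real.sqrt π := Real.sqrt_pos.2 pi_pos
    have p2 : (0:ℝ) < Real.sqrt (1 - s ^ 2) := Real.sqrt_pos.2 h1
    have p3 : (0:ℝ) < Real.sqrt (1 - s' ^ 2) := Real.sqrt_pos.2 h2
    have p4 : (0:ℝ) < Real.sqrt A := Real.sqrt_pos.2 hA
    field_simp
  calc π ^ (-(1:ℝ) / 2) * (1 - s ^ 2) ^ (-(1:ℝ) / 2) *
        (π ^ (-(1:ℝ) / 2) * (1 - s' ^ 2) ^ (-(1:ℝ) / 2)) *
        (Real.sqrt (π / A) * Real.exp (B ^ 2 / (4 * A) + D))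
      = (π ^ (-(1:ℝ) / 2) * (1 - s ^ 2) ^ (-(1:ℝ) / 2) *
        (π ^ (-(1:ℝ) / 2) * (1 - s' ^ 2) ^ (-(1:ℝ) / 2)) * Real.sqrt (π / A)) *
        Real.exp (B ^ 2 / (4 * A) + D) := by ring
    _ = _ := by rw [hconst, hexp]

lemma mehler_prod (n : ℕ) (t : ℝ) (ht : 0 < t) (x y : Fin n → ℝ) :
    mehlerKernel n t x y = ∏ i, mehlerK1 (Real.exp (-t)) (x i) (y i) := by
  unfold mehlerK1
  have he : Real.exp (-(2 * t)) = Real.exp (-t) ^ 2 := by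
    rw [show -(2 * t) = ((2 : ℕ) : ℝ) * (-t) by push_cast; ring, Real.exp_nat_mul]
  have hd : (0:ℝ) < 1 - Real.exp (-t) ^ 2 := by
    have h1 : Real.exp (-t) < 1 := Real.exp_lt_one_iff.2 (by linarith)
    have h0 : 0 < Real.exp (-t) := Real.exp_pos _
    nlinarith
  rw [Finset.prod_mul_distrib, Finset.prod_mul_distrib, Finset.prod_const, Finset.prod_const,
    ← Real.exp_sum]
  unfold mehlerKernel
  rw [he]
  congr 1
  · congr 1
    · rw [← Real.rpow_natCast (π ^ (-(1:ℝ)/2)) _, ← Real.rpow_mul pi_pos.le]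
      norm_num
      ring_nf
    · rw [← Real.rpow_natCast ((1 - Real.exp (-t) ^ 2) ^ (-(1:ℝ)/2)) _,
        ← Real.rpow_mul hd.le]
      norm_num
      ring_nf
  · have key : ∀ i ∈ Finset.univ, -((x i ^ 2 + y i ^ 2) / 2 * (1 + Real.exp (-t) ^ 2)
        - 2 * Real.exp (-t) * (x i * y i)) / (1 - Real.exp (-t) ^ 2)
        = x i ^ 2 * (-(1 + Real.exp (-t) ^ 2) / (2 * (1 - Real.exp (-t) ^ 2)))
          + y i ^ 2 * (-(1 + Real.exp (-t) ^ 2) / (2 * (1 - Real.exp (-t) ^ 2)))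
          + (x i * y i) * (2 * Real.exp (-t) / (1 - Real.exp (-t) ^ 2)) := by
      intro i _
      field_simp
      ring
    rw [Finset.sum_congr rfl key, Finset.sum_add_distrib, Finset.sum_add_distrib,
      ← Finset.sum_mul, ← Finset.sum_mul, ← Finset.sum_mul]
    field_simp
    ring

theorem mehlerKernel_semigroup (n : ℕ) (hn : 1 ≤ n)
    (t t' : ℝ) (ht : 0 < t) (ht' : 0 < t') (x y : Fin n → ℝ) :
    ∫ z : Fin n → ℝ, mehlerKernel n t x z * mehlerKernel n t' z y
      = mehlerKernel n (t + t') x y := by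
  have hs : 0 < Real.exp (-t) := Real.exp_pos _
  have hs1 : Real.exp (-t) < 1 := Real.exp_lt_one_iff.2 (by linarith)
  have hs' : 0 < Real.exp (-t') := Real.exp_pos _
  have hs1' : Real.exp (-t') < 1 := Real.exp_lt_one_iff.2 (by linarith)
  have hpt : ∀ z : Fin n → ℝ, mehlerKernel n t x z * mehlerKernel n t' z y
      = ∏ i, (mehlerK1 (Real.exp (-t)) (x i) (z i) * mehlerK1 (Real.exp (-t')) (z i) (y i)) := by
    intro z
    rw [mehler_prod n t ht x z, mehler_prod n t' ht' z y, ← Finset.prod_mul_distrib]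
  simp_rw [hpt]
  rw [MeasureTheory.integral_fintype_prod_volume_eq_prod (ι := Fin n)
    (fun i u => mehlerK1 (Real.exp (-t)) (x i) u * mehlerK1 (Real.exp (-t')) u (y i)),
    mehler_prod n (t + t') (by linarith) x y]
  refine Finset.prod_congr rfl fun i _ => ?_
  rw [show -(t + t') = -t + -t' by ring, Real.exp_add]
  exact mehlerK1_semigroup _ _ _ _ hs hs1 hs' hs1'
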